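/- arXiv:1906.07481 — 2 statements merged into one kernel-verified Lean document; each statement's English description precedes it below -/
import Mathlib

section
/- Let n ≥ 4 and let (π, V) be a real representation of the symmetric group S_n on a finite-dimensional real vector space. Then the multiplicity of −1 as an eigenvalue of π((1 2)(3 4)) is even; equivalently, χ_π(1) − χ_π((1 2)(3 4)) is divisible by 4, where χ_π(g) = trace(π(g)). -/
open Equiv LinearMap Module

private theorem perm_prod4 {α : Type*} [DecidableEq α] {a b c d : α} (hab : a ≠ b) (hac : a ≠ c)
    (had : a ≠ d) (hbc : b ≠ c) (hbd : b ≠ d) (hcd : c ≠ d) :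
    (swap a b * swap c d) * (swap a c * swap b d) = swap a d * swap b c := by
  ext x
  by_cases hxa : x = a <;> by_cases hxb : x = b <;> by_cases hxc : x = c <;>
    by_cases hxd : x = d <;>
    simp [Perm.mul_apply, swap_apply_def, hxa, hxb, hxc, hxd,
      hab, hac, had, hbc, hbd, hcd, hab.symm, hac.symm, had.symm, hbc.symm, hbd.symm, hcd.symm]

private theorem perm_prod4' {α : Type*} [DecidableEq α] {a b c d : α} (hab : a ≠ b) (hac : a ≠ c)
    (had : a ≠ d) (hbc : b ≠ c) (hbd : b ≠ d) (hcd : c ≠ d) :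
    (swap a c * swap b d) * (swap a b * swap c d) = swap a d * swap b c := by
  ext x
  by_cases hxa : x = a <;> by_cases hxb : x = b <;> by_cases hxc : x = c <;>
    by_cases hxd : x = d <;>
    simp [Perm.mul_apply, swap_apply_def, hxa, hxb, hxc, hxd,
      hab, hac, had, hbc, hbd, hcd, hab.symm, hac.symm, had.symm, hbc.symm, hbd.symm, hcd.symm]

private theorem perm_sq4 {α : Type*} [DecidableEq α] {a b c d : α} (hab : a ≠ b) (hac : a ≠ c)
    (had : a ≠ d) (hbc : b ≠ c) (hbd : b ≠ d) (hcd : c ≠ d) :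
    (swap a b * swap c d) * (swap a b * swap c d) = 1 := by
  ext x
  by_cases hxa : x = a <;> by_cases hxb : x = b <;> by_cases hxc : x = c <;>
    by_cases hxd : x = d <;>
    simp [Perm.mul_apply, swap_apply_def, hxa, hxb, hxc, hxd,
      hab, hac, had, hbc, hbd, hcd, hab.symm, hac.symm, had.symm, hbc.symm, hbd.symm, hcd.symm]

private theorem perm_conj4 {α : Type*} [DecidableEq α] {a b c d : α} (hab : a ≠ b) (hac : a ≠ c)
    (had : a ≠ d) (hbc : b ≠ c) (hbd : b ≠ d) (hcd : c ≠ d) :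
    swap c d * (swap a c * swap b d) = (swap a d * swap b c) * swap c d := by
  ext x
  by_cases hxa : x = a <;> by_cases hxb : x = b <;> by_cases hxc : x = c <;>
    by_cases hxd : x = d <;>
    simp [Perm.mul_apply, swap_apply_def, hxa, hxb, hxc, hxd,
      hab, hac, had, hbc, hbd, hcd, hab.symm, hac.symm, had.symm, hbc.symm, hbd.symm, hcd.symm]

private theorem trace_idem' {V : Type*} [AddCommGroup V] [Module ℝ V] [FiniteDimensional ℝ V]
    (f : End ℝ V) (h : f * f = f) :
    trace ℝ V f = (finrank ℝ (LinearMap.range f) : ℝ) := by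
  have hproj : IsProj (LinearMap.range f) f := by
    refine ⟨fun x => mem_range_self f x, ?_⟩
    rintro x ⟨y, rfl⟩
    exact congrFun (congrArg DFunLike.coe h) y
  exact hproj.trace

private theorem eig_proj' {V : Type*} [AddCommGroup V] [Module ℝ V]
    (A : End ℝ V) (hA : A * A = 1) :
    IsProj (End.eigenspace A (-1)) ((2:ℝ)⁻¹ • (1 - A)) := by
  constructor
  · intro x
    rw [Module.End.mem_eigenspace_iff]
    have h : A * ((2:ℝ)⁻¹ • (1 - A)) = -((2:ℝ)⁻¹ • (1 - A)) := by
      rw [mul_smul_comm, mul_sub, mul_one, hA, ← smul_neg]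
      congr 1
      abel
    calc A (((2:ℝ)⁻¹ • (1 - A)) x) = (A * ((2:ℝ)⁻¹ • (1 - A))) x := rfl
      _ = (-((2:ℝ)⁻¹ • (1 - A))) x := by rw [h]
      _ = (-1 : ℝ) • ((2:ℝ)⁻¹ • (1 - A)) x := by simp
  · intro x hx
    rw [Module.End.mem_eigenspace_iff] at hx
    show (2:ℝ)⁻¹ • (x - A x) = x
    rw [hx, neg_one_smul, sub_neg_eq_add, ← two_smul ℝ x, smul_smul]
    norm_num

private theorem key {α : Type*} [DecidableEq α] {V : Type*} [AddCommGroup V] [Module ℝ V]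
    [FiniteDimensional ℝ V] (π : Representation ℝ (Equiv.Perm α) V)
    {a b c d : α} (hab : a ≠ b) (hac : a ≠ c)
    (had : a ≠ d) (hbc : b ≠ c) (hbd : b ≠ d) (hcd : c ≠ d) :
    Even (finrank ℝ (Module.End.eigenspace (π (swap a b * swap c d)) (-1))) ∧
      ∃ k : ℤ, trace ℝ V (π 1) - trace ℝ V (π (swap a b * swap c d)) = 4 * k := by
  set σ := swap a b * swap c d with hσ
  set τ := swap a c * swap b d with hτ
  set υ := swap a d * swap b c with hυ
  set A : End ℝ V := π σ with hA
  set B : End ℝ V := π τ with hB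
  have hA2 : A * A = 1 := by
    rw [hA, ← map_mul, perm_sq4 hab hac had hbc hbd hcd, map_one]
  have hB2 : B * B = 1 := by
    rw [hB, ← map_mul, perm_sq4 hac hab had hbc.symm hcd hbd, map_one]
  have hABBA : A * B = B * A := by
    rw [hA, hB, ← map_mul, ← map_mul, perm_prod4 hab hac had hbc hbd hcd,
      perm_prod4' hab hac had hbc hbd hcd]
  -- trace identities: tr(AB) = tr(B) via conjugation by swap c d
  have hABυ : A * B = π υ := by
    rw [hA, hB, ← map_mul, perm_prod4 hab hac had hbc hbd hcd, hυ]
  have htr : trace ℝ V (A * B) = trace ℝ V B := by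
    have g2 : π (swap c d) * π (swap c d) = 1 := by
      rw [← map_mul, swap_mul_self, map_one]
    have hcnj : π (swap c d) * B = (A * B) * π (swap c d) := by
      rw [hABυ, hB, ← map_mul, ← map_mul, perm_conj4 hab hac had hbc hbd hcd]
    calc trace ℝ V (A * B) = trace ℝ V (((A * B) * π (swap c d)) * π (swap c d)) := by
          rw [mul_assoc (A * B), g2, mul_one]
      _ = trace ℝ V ((π (swap c d) * B) * π (swap c d)) := by rw [hcnj]
      _ = trace ℝ V (π (swap c d) * ((π (swap c d)) * B)) := by
          rw [trace_mul_comm]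
      _ = trace ℝ V ((π (swap c d) * π (swap c d)) * B) := by rw [mul_assoc]
      _ = trace ℝ V B := by rw [g2, one_mul]
  -- projections
  set P : End ℝ V := (2:ℝ)⁻¹ • (1 - A) with hPdef
  set Q : End ℝ V := (2:ℝ)⁻¹ • (1 - B) with hQdef
  have hPproj : IsProj (Module.End.eigenspace A (-1)) P := eig_proj' A hA2
  have hPP : P * P = P := (isProj_iff_isIdempotentElem P).mp ⟨_, hPproj⟩
  have hQQ : Q * Q = Q := (isProj_iff_isIdempotentElem Q).mp ⟨_, eig_proj' B hB2⟩
  have hPQ : P * Q = Q * P := by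
    rw [hPdef, hQdef, smul_mul_smul_comm, smul_mul_smul_comm]
    congr 1
    have e1 : (1 - A) * (1 - B) = 1 - A - B + A * B := by noncomm_ring
    have e2 : (1 - B) * (1 - A) = 1 - A - B + B * A := by noncomm_ring
    rw [e1, e2, hABBA]
  have hRR : (P * Q) * (P * Q) = P * Q := by
    calc (P * Q) * (P * Q) = P * ((Q * P) * Q) := by noncomm_ring
      _ = P * ((P * Q) * Q) := by rw [← hPQ]
      _ = (P * P) * (Q * Q) := by noncomm_ring
      _ = P * Q := by rw [hPP, hQQ]
  have hcPQ : (P * Q) * P = P * Q := by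
    rw [mul_assoc, ← hPQ, ← mul_assoc, hPP]
  have hSS : (P - P * Q) * (P - P * Q) = P - P * Q := by
    rw [sub_mul, mul_sub, mul_sub, hPP, ← mul_assoc, hPP, hcPQ, hRR]
    abel
  -- traces of projections
  set t1 := trace ℝ V (1 : End ℝ V) with ht1
  have htrP : trace ℝ V P = 2⁻¹ * (t1 - trace ℝ V A) := by
    rw [hPdef, map_smul, map_sub, smul_eq_mul, ht1]
  have htrPQ : trace ℝ V (P * Q) =
      4⁻¹ * (t1 - trace ℝ V A - trace ℝ V B + trace ℝ V (A * B)) := by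
    have : P * Q = (4⁻¹ : ℝ) • (1 - A - B + A * B) := by
      have e : (1 - A) * (1 - B) = 1 - A - B + A * B := by noncomm_ring
      rw [hPdef, hQdef, smul_mul_smul_comm, e]
      congr 1
      norm_num
    rw [this, map_smul, map_add, map_sub, map_sub, smul_eq_mul, ht1]
  have htrS : trace ℝ V (P - P * Q) = trace ℝ V P - trace ℝ V (P * Q) := by
    rw [map_sub]
  -- finranks
  set r := finrank ℝ (LinearMap.range (P * Q)) with hr
  set s := finrank ℝ (LinearMap.range (P - P * Q)) with hs
  set m := finrank ℝ (Module.End.eigenspace A (-1)) with hm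
  have hmP : (m : ℝ) = trace ℝ V P := hPproj.trace.symm
  have hrP : (r : ℝ) = trace ℝ V (P * Q) := (trace_idem' _ hRR).symm
  have hsP : (s : ℝ) = trace ℝ V (P - P * Q) := (trace_idem' _ hSS).symm
  have hrs : r = s := by
    have : (r : ℝ) = (s : ℝ) := by
      rw [hrP, hsP, htrPQ, htrS, htrP, htrPQ, htr]
      ring
    exact_mod_cast this
  have hmrs : m = r + s := by
    have : (m : ℝ) = (r : ℝ) + (s : ℝ) := by
      rw [hmP, hrP, hsP, htrS]; ring
    exact_mod_cast this
  constructor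
  · exact ⟨r, by omega⟩
  · refine ⟨(r : ℤ), ?_⟩
    have hπ1 : trace ℝ V (π 1) = t1 := by rw [map_one, ht1]
    have hm2r : (m : ℝ) = 2 * r := by
      rw [hmrs]; push_cast; rw [hrs]; ring
    rw [hπ1]
    have := hmP
    rw [htrP, hm2r] at this
    push_cast
    linarith



/-- For a real representation `π` of `Sₙ` (`n ≥ 4`), the multiplicity of `−1` as an
eigenvalue of `π((1 2)(3 4))` is even; equivalently `4 ∣ χ_π(1) − χ_π((1 2)(3 4))`. -/
theorem even_neg_one_multiplicity_symmetricGroup {n : ℕ} (hn : 4 ≤ n)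
    {V : Type*} [AddCommGroup V] [Module ℝ V] [FiniteDimensional ℝ V]
    (π : Representation ℝ (Equiv.Perm (Fin n)) V) :
    Even (Module.finrank ℝ
        (Module.End.eigenspace (π (Equiv.swap (⟨0, by omega⟩ : Fin n) ⟨1, by omega⟩ *
          Equiv.swap (⟨2, by omega⟩ : Fin n) ⟨3, by omega⟩)) (-1))) ∧
      ∃ k : ℤ, LinearMap.trace ℝ V (π 1) -
          LinearMap.trace ℝ V (π (Equiv.swap (⟨0, by omega⟩ : Fin n) ⟨1, by omega⟩ *
            Equiv.swap (⟨2, by omega⟩ : Fin n) ⟨3, by omega⟩)) = 4 * k := by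
  exact key π (by simp [Fin.ext_iff]) (by simp [Fin.ext_iff]) (by simp [Fin.ext_iff])
    (by simp [Fin.ext_iff]) (by simp [Fin.ext_iff]) (by simp [Fin.ext_iff])
end

section
/- For n ≥ 2, the standard representation of the symmetric group S_n, i.e., the orthogonal representation of S_n on the Euclidean space ℝ^n in which each σ ∈ S_n permutes the standard basis vectors (sending e_i to e_{σ(i)}), is not spinorial. -/
/-- The quadratic form `v ↦ -‖v‖²` on a real inner product space. -/
noncomputable def negInnerQ (V : Type*) [NormedAddCommGroup V] [InnerProductSpace ℝ V] :
    QuadraticForm ℝ V :=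
  -(LinearMap.BilinMap.toQuadraticMap (innerₗ V : LinearMap.BilinForm ℝ V))

/-- `πhat` is a lift of the orthogonal representation `π` to the Pin group:
`α(π̂(g)) · ι(v) · π̂(g)⁻¹ = ι(π(g)(v))` for all `g` and `v`. -/
def IsLift {G V : Type*} [Group G] [NormedAddCommGroup V] [InnerProductSpace ℝ V]
    (π : G →* (V ≃ₗᵢ[ℝ] V)) (πhat : G →* pinGroup (negInnerQ V)) : Prop :=
  ∀ (g : G) (v : V),
    CliffordAlgebra.involute ((πhat g : pinGroup (negInnerQ V)) : CliffordAlgebra (negInnerQ V)) *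
        CliffordAlgebra.ι (negInnerQ V) v *
        (((πhat g)⁻¹ : pinGroup (negInnerQ V)) : CliffordAlgebra (negInnerQ V)) =
      CliffordAlgebra.ι (negInnerQ V) (π g v)

/-- An orthogonal representation is spinorial if it lifts to the Pin group. -/
def IsSpinorial {G V : Type*} [Group G] [NormedAddCommGroup V] [InnerProductSpace ℝ V]
    (π : G →* (V ≃ₗᵢ[ℝ] V)) : Prop :=
  ∃ πhat : G →* pinGroup (negInnerQ V), IsLift π πhat

namespace NotSpinorialAux

open CliffordAlgebra

section General

variable {M : Type*} [AddCommGroup M] [Module ℝ M] {Q : QuadraticForm ℝ M}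

/-- Twisted Leibniz rule for left contraction. -/
theorem contract_mul (d : Module.Dual ℝ M) (x y : CliffordAlgebra Q) :
    contractLeft d (x * y) =
      contractLeft d x * y + involute x * contractLeft d y := by
  revert y
  refine CliffordAlgebra.induction
    (C := fun x => ∀ y : CliffordAlgebra Q, contractLeft d (x * y) =
      contractLeft d x * y + involute x * contractLeft d y) ?_ ?_ ?_ ?_ x
  · intro r y
    simp [contractLeft_algebraMap_mul, contractLeft_algebraMap]
  · intro m y
    rw [contractLeft_ι_mul, contractLeft_ι, involute_ι, Algebra.smul_def, sub_eq_add_neg, neg_mul]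
  · intro a b ha hb y
    rw [mul_assoc, ha (b * y), hb y, ha b, map_mul]
    simp only [mul_add, add_mul, mul_assoc]
    abel
  · intro a b ha hb y
    simp only [add_mul, map_add, ha y, hb y, mul_add]
    abel

/-- Fundamental identity: left Clifford multiplication by a vector equals twisted right
multiplication plus contraction by the polar form. -/
theorem ι_mul_eq (v : M) (x : CliffordAlgebra Q) :
    ι Q v * x = involute x * ι Q v
      + contractLeft (QuadraticMap.polarBilin Q v) x := by
  refine CliffordAlgebra.induction
    (C := fun x => ι Q v * x = involute x * ι Q v
      + contractLeft (QuadraticMap.polarBilin Q v) x) ?_ ?_ ?_ ?_ x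
  · intro r
    simp [Algebra.commutes, contractLeft_algebraMap]
  · intro m
    have h := ι_mul_ι_add_swap (Q := Q) v m
    rw [contractLeft_ι, involute_ι, QuadraticMap.polarBilin_apply_apply, neg_mul, ← h]
    abel
  · intro a b ha hb
    rw [← mul_assoc, ha, add_mul, mul_assoc, hb, contract_mul, map_mul]
    simp only [mul_add, add_mul, mul_assoc]
    abel
  · intro a b ha hb
    simp only [mul_add, map_add, ha, hb, add_mul]
    abel

end General

section Exterior

variable {M : Type*} [AddCommGroup M] [Module ℝ M]
variable {κ : Type*} [Fintype κ] (b : Module.Basis κ ℝ M)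

local notation "Λ" => CliffordAlgebra (0 : QuadraticForm ℝ M)

/-- The number (Euler) operator on the exterior algebra. -/
noncomputable def numberOp : Module.End ℝ Λ :=
  ∑ i, (LinearMap.mulLeft ℝ (ι (0 : QuadraticForm ℝ M) (b i))) ∘ₗ
    (contractLeft (b.coord i) : Λ →ₗ[ℝ] Λ)

theorem numberOp_apply (x : Λ) :
    numberOp b x = ∑ i, ι (0 : QuadraticForm ℝ M) (b i) * contractLeft (b.coord i) x := by
  simp [numberOp]

theorem numberOp_algebraMap (r : ℝ) :
    numberOp b (algebraMap ℝ Λ r) = 0 := by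
  simp [numberOp_apply, contractLeft_algebraMap]

theorem exterior_ι_anticomm (a c : M) :
    ι (0 : QuadraticForm ℝ M) a * ι (0 : QuadraticForm ℝ M) c
      = -(ι (0 : QuadraticForm ℝ M) c * ι (0 : QuadraticForm ℝ M) a) := by
  have h := ι_mul_ι_add_swap (Q := (0 : QuadraticForm ℝ M)) a c
  have hp : QuadraticMap.polar (0 : QuadraticForm ℝ M) a c = 0 := by
    simp [QuadraticMap.polar]
  rw [hp, map_zero] at h
  exact eq_neg_of_add_eq_zero_left h

theorem numberOp_ι_mul (v : M) (x : Λ) :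
    numberOp b (ι (0 : QuadraticForm ℝ M) v * x)
      = ι (0 : QuadraticForm ℝ M) v * x + ι (0 : QuadraticForm ℝ M) v * numberOp b x := by
  rw [numberOp_apply]
  have h1 : ∀ i : κ, ι (0 : QuadraticForm ℝ M) (b i)
      * contractLeft (b.coord i) (ι (0 : QuadraticForm ℝ M) v * x)
      = b.coord i v • (ι (0 : QuadraticForm ℝ M) (b i) * x)
        + ι (0 : QuadraticForm ℝ M) v *
          (ι (0 : QuadraticForm ℝ M) (b i) * contractLeft (b.coord i) x) := by
    intro i
    rw [contractLeft_ι_mul, mul_sub, mul_smul_comm, ← mul_assoc,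
      exterior_ι_anticomm (b i) v, neg_mul, mul_assoc, sub_eq_add_neg, neg_neg]
  rw [Finset.sum_congr rfl fun i _ => h1 i, Finset.sum_add_distrib, ← Finset.mul_sum,
    ← numberOp_apply]
  congr 1
  have h3 : ∀ i : κ, b.coord i v • (ι (0 : QuadraticForm ℝ M) (b i) * x)
      = (b.coord i v • ι (0 : QuadraticForm ℝ M) (b i)) * x := by
    intro i; rw [smul_mul_assoc]
  rw [Finset.sum_congr rfl fun i _ => h3 i, ← Finset.sum_mul]
  congr 1
  have h2 : (∑ i, (b.coord i) v • (ι (0 : QuadraticForm ℝ M)) (b i))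
      = ι (0 : QuadraticForm ℝ M) (∑ i, (b.coord i) v • b i) := by
    rw [map_sum]
    exact Finset.sum_congr rfl fun i _ => (map_smul _ _ _).symm
  rw [h2]
  congr 1
  simp only [Module.Basis.coord_apply]
  exact b.sum_repr v

/-- An element of the exterior algebra killed by all coordinate contractions is a scalar. -/
theorem exterior_scalar (y : Λ)
    (hy : ∀ i, contractLeft (Q := (0 : QuadraticForm ℝ M)) (b.coord i) y = 0) :
    ∃ r : ℝ, y = algebraMap ℝ Λ r := by
  classical
  set S : Submodule ℝ Λ :=
    LinearMap.range (Algebra.linearMap ℝ Λ)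
      ⊔ ⨆ (k : ℕ) (_ : k ≠ 0), Module.End.eigenspace (numberOp b) (k : ℝ) with hS
  have halg : ∀ r : ℝ, algebraMap ℝ Λ r ∈ S := fun r =>
    Submodule.mem_sup_left ⟨r, rfl⟩
  have h1S : (1 : Λ) ∈ S := by have := halg 1; rwa [map_one] at this
  have heig : ∀ (k : ℕ), k ≠ 0 → ∀ z : Λ, numberOp b z = (k : ℝ) • z → z ∈ S := by
    intro k hk z hz
    refine Submodule.mem_sup_right ?_
    exact Submodule.mem_iSup_of_mem k <| Submodule.mem_iSup_of_mem hk <|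
      Module.End.mem_eigenspace_iff.mpr hz
  have hH1 : numberOp b (1 : Λ) = 0 := by
    have := numberOp_algebraMap b 1; rwa [map_one] at this
  have hιS : ∀ v : M, ∀ z ∈ S, ι (0 : QuadraticForm ℝ M) v * z ∈ S := by
    intro v
    have hle : S ≤ Submodule.comap (LinearMap.mulLeft ℝ (ι (0 : QuadraticForm ℝ M) v)) S := by
      rw [hS]
      apply sup_le
      · rintro _ ⟨r, rfl⟩
        simp only [Submodule.mem_comap, LinearMap.mulLeft_apply, Algebra.linearMap_apply]
        rw [← Algebra.commutes, ← Algebra.smul_def]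
        refine Submodule.smul_mem _ _ ?_
        refine heig 1 one_ne_zero _ ?_
        have := numberOp_ι_mul b v 1
        rw [mul_one, hH1, mul_zero, add_zero] at this
        rw [this, Nat.cast_one, one_smul]
      · refine iSup₂_le fun k hk => ?_
        intro z hz
        simp only [Submodule.mem_comap, LinearMap.mulLeft_apply]
        rw [Module.End.mem_eigenspace_iff] at hz
        refine heig (k + 1) (Nat.succ_ne_zero k) _ ?_
        rw [numberOp_ι_mul, hz, mul_smul_comm]
        push_cast
        rw [add_smul, one_smul]
        abel
    exact fun z hz => hle hz
  have hmulS : ∀ x : Λ, ∀ z ∈ S, x * z ∈ S := by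
    intro x
    refine CliffordAlgebra.induction (C := fun x => ∀ z ∈ S, x * z ∈ S) ?_ ?_ ?_ ?_ x
    · intro r z hz
      rw [← Algebra.smul_def]
      exact Submodule.smul_mem _ _ hz
    · exact hιS
    · intro a c ha hc z hz
      rw [mul_assoc]; exact ha _ (hc z hz)
    · intro a c ha hc z hz
      rw [add_mul]; exact Submodule.add_mem _ (ha z hz) (hc z hz)
  have hyS : y ∈ S := by
    have := hmulS y 1 h1S; rwa [mul_one] at this
  have hHy : numberOp b y = 0 := by
    rw [numberOp_apply]
    refine Finset.sum_eq_zero fun i _ => ?_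
    rw [hy i, mul_zero]
  rw [hS] at hyS
  obtain ⟨a, ha, z, hz, hsum⟩ := Submodule.mem_sup.mp hyS
  obtain ⟨r, rfl⟩ := ha
  refine ⟨r, ?_⟩
  have hHz : numberOp b z = 0 := by
    have hz' : z = y - algebraMap ℝ Λ r := by
      rw [← hsum, Algebra.linearMap_apply]; abel
    rw [hz', map_sub, hHy, numberOp_algebraMap, sub_zero]
  have hz0 : z ∈ Module.End.eigenspace (numberOp b) (0 : ℝ) :=
    Module.End.mem_eigenspace_iff.mpr (by rw [hHz, zero_smul])
  have hle2 : (⨆ (k : ℕ) (_ : k ≠ 0), Module.End.eigenspace (numberOp b) (k : ℝ))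
      ≤ ⨆ (μ : ℝ) (_ : μ ≠ (0 : ℝ)), Module.End.eigenspace (numberOp b) μ := by
    refine iSup₂_le fun k hk => ?_
    exact le_iSup₂ (f := fun (μ : ℝ) (_ : μ ≠ (0 : ℝ)) => Module.End.eigenspace (numberOp b) μ)
      (k : ℝ) (Nat.cast_ne_zero.mpr hk)
  have hz1 := hle2 hz
  have hdis := Module.End.eigenspaces_iSupIndep (numberOp b) (i := (0 : ℝ))
  have hz2 : z = 0 := Submodule.disjoint_def.mp hdis z hz0 hz1
  rw [← hsum, hz2, add_zero, Algebra.linearMap_apply]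

end Exterior

section Euclidean

variable {V : Type*} [NormedAddCommGroup V] [InnerProductSpace ℝ V]

theorem negInnerQ_apply (v : V) : negInnerQ V v = -(inner ℝ v v : ℝ) := by
  simp [negInnerQ]

theorem polar_negInnerQ (v w : V) :
    QuadraticMap.polar (negInnerQ V) v w = -(2 * (inner ℝ v w : ℝ)) := by
  simp only [QuadraticMap.polar, negInnerQ_apply, real_inner_add_add_self]
  ring

theorem zero_sub_negInnerQ :
    (LinearMap.BilinMap.toQuadraticMap (innerₗ V : LinearMap.BilinForm ℝ V)) = (0 : QuadraticForm ℝ V) - negInnerQ V := by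
  rw [negInnerQ, zero_sub, neg_neg]

/-- An element of the Clifford algebra killed by all contractions is a scalar. -/
theorem clifford_scalar {n : ℕ} (c : CliffordAlgebra (negInnerQ (EuclideanSpace ℝ (Fin n))))
    (hc : ∀ v : EuclideanSpace ℝ (Fin n),
      contractLeft (QuadraticMap.polarBilin (negInnerQ (EuclideanSpace ℝ (Fin n))) v) c = 0) :
    ∃ r : ℝ, c = algebraMap ℝ _ r := by
  classical
  set b : Module.Basis (Fin n) ℝ (EuclideanSpace ℝ (Fin n)) :=
    (EuclideanSpace.basisFun (Fin n) ℝ).toBasis with hb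
  have hcoord : ∀ i, contractLeft (Q := negInnerQ (EuclideanSpace ℝ (Fin n))) (b.coord i) c = 0 := by
    intro i
    have hdual : b.coord i = (-(1/2) : ℝ) •
        QuadraticMap.polarBilin (negInnerQ (EuclideanSpace ℝ (Fin n)))
          (EuclideanSpace.single i (1 : ℝ)) := by
      ext w
      rw [LinearMap.smul_apply, QuadraticMap.polarBilin_apply_apply, polar_negInnerQ,
        Module.Basis.coord_apply, hb, OrthonormalBasis.coe_toBasis_repr_apply,
        EuclideanSpace.basisFun_repr, EuclideanSpace.inner_single_left]
      simp
    rw [hdual, map_smul, LinearMap.smul_apply, hc, smul_zero]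
  set L := changeForm (Q' := (0 : QuadraticForm ℝ (EuclideanSpace ℝ (Fin n))))
    zero_sub_negInnerQ with hL
  have hLc : ∀ i, contractLeft (Q := (0 : QuadraticForm ℝ (EuclideanSpace ℝ (Fin n))))
      (b.coord i) (L c) = 0 := by
    intro i
    rw [hL, ← changeForm_contractLeft, hcoord, map_zero]
  obtain ⟨r, hr⟩ := exterior_scalar b (L c) hLc
  refine ⟨r, ?_⟩
  have hinj : Function.Injective L := (changeFormEquiv zero_sub_negInnerQ).injective
  apply hinj
  rw [hr, hL, changeForm_algebraMap]

/-- The twisted-centralizer lemma: an element that twisted-commutes with every vector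
is a scalar. -/
theorem scalar_of_twisted_central {n : ℕ}
    (c : CliffordAlgebra (negInnerQ (EuclideanSpace ℝ (Fin n))))
    (hc : ∀ v : EuclideanSpace ℝ (Fin n),
      involute c * ι (negInnerQ (EuclideanSpace ℝ (Fin n))) v
        = ι (negInnerQ (EuclideanSpace ℝ (Fin n))) v * c) :
    ∃ r : ℝ, c = algebraMap ℝ _ r := by
  refine clifford_scalar c fun v => ?_
  have h := ι_mul_eq v c
  rw [hc v, left_eq_add] at h
  exact h

end Euclidean

end NotSpinorialAux

open CliffordAlgebra NotSpinorialAux in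
/-- For `n ≥ 2`, the standard representation of `Sₙ` on `ℝⁿ`
(permuting the standard basis vectors) is not spinorial. -/
theorem standard_representation_not_spinorial {n : ℕ} (hn : 2 ≤ n)
    (π : Equiv.Perm (Fin n) →* (EuclideanSpace ℝ (Fin n) ≃ₗᵢ[ℝ] EuclideanSpace ℝ (Fin n)))
    (hπ : ∀ (g : Equiv.Perm (Fin n)) (i : Fin n),
      π g (EuclideanSpace.single i (1 : ℝ)) = EuclideanSpace.single (g i) (1 : ℝ)) :
    ¬ IsSpinorial π := by
  rintro ⟨πhat, hlift⟩
  classical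
  let i0 : Fin n := ⟨0, by omega⟩
  let i1 : Fin n := ⟨1, by omega⟩
  have hne : i0 ≠ i1 := by simp [i0, i1, Fin.ext_iff]
  set τ : Equiv.Perm (Fin n) := Equiv.swap i0 i1 with hτdef
  set x : CliffordAlgebra (negInnerQ (EuclideanSpace ℝ (Fin n))) :=
    ((πhat τ : pinGroup (negInnerQ (EuclideanSpace ℝ (Fin n)))) :
      CliffordAlgebra (negInnerQ (EuclideanSpace ℝ (Fin n)))) with hxdef
  have hττ : τ * τ = 1 := Equiv.swap_mul_self _ _
  have hgrp : πhat τ * πhat τ = 1 := by rw [← map_mul, hττ, map_one]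
  have hx2 : x * x = 1 := by
    have := congrArg (fun t : pinGroup (negInnerQ (EuclideanSpace ℝ (Fin n))) =>
      (t : CliffordAlgebra (negInnerQ (EuclideanSpace ℝ (Fin n))))) hgrp
    simpa using this
  have hinv : (πhat τ)⁻¹ = πhat τ := inv_eq_of_mul_eq_one_right hgrp
  have hrel : ∀ v : EuclideanSpace ℝ (Fin n),
      involute x * ι (negInnerQ (EuclideanSpace ℝ (Fin n))) v
        = ι (negInnerQ (EuclideanSpace ℝ (Fin n))) (π τ v) * x := by
    intro v
    have h := hlift τ v
    rw [hinv] at h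
    have h2 := congrArg (fun t => t * x) h
    simp only [← hxdef] at h2
    simpa only [mul_assoc, hx2, mul_one] using h2
  set e : Fin n → EuclideanSpace ℝ (Fin n) := fun k => EuclideanSpace.single k (1 : ℝ) with hedef
  set w : EuclideanSpace ℝ (Fin n) := e i0 - e i1 with hwdef
  have hinner : ∀ k l : Fin n, (inner ℝ (e k) (e l) : ℝ) = if k = l then 1 else 0 := by
    intro k l
    rw [hedef]
    simp only [EuclideanSpace.inner_single_left, map_one, one_mul, EuclideanSpace.single_apply]
  have hQe : ∀ k, negInnerQ (EuclideanSpace ℝ (Fin n)) (e k) = -1 := by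
    intro k
    have h : (inner ℝ (e k) (e k) : ℝ) = 1 := by rw [hinner]; simp
    rw [negInnerQ_apply, h]
  have hQw : negInnerQ (EuclideanSpace ℝ (Fin n)) w = -2 := by
    rw [negInnerQ_apply, hwdef, real_inner_sub_sub_self, hinner, hinner, hinner]
    simp only [if_pos rfl, if_neg hne]
    norm_num
  have hτ0 : τ i0 = i1 := Equiv.swap_apply_left _ _
  have hτ1 : τ i1 = i0 := Equiv.swap_apply_right _ _
  have hπτ : ∀ k, π τ (e k) = e (τ k) := fun k => hπ τ k
  have hspan : ∀ v : EuclideanSpace ℝ (Fin n), v ∈ Submodule.span ℝ (Set.range e) := by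
    intro v
    have h := ((EuclideanSpace.basisFun (Fin n) ℝ).toBasis).span_eq
    have hre : Set.range ⇑((EuclideanSpace.basisFun (Fin n) ℝ).toBasis) = Set.range e := by
      rw [OrthonormalBasis.coe_toBasis]
      exact congrArg Set.range (funext fun k => EuclideanSpace.basisFun_apply _ _ k)
    rw [hre] at h
    rw [h]
    trivial
  have hkey : ∀ v : EuclideanSpace ℝ (Fin n),
      ι (negInnerQ (EuclideanSpace ℝ (Fin n))) v * ι (negInnerQ (EuclideanSpace ℝ (Fin n))) w
        + ι (negInnerQ (EuclideanSpace ℝ (Fin n))) w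
          * ι (negInnerQ (EuclideanSpace ℝ (Fin n))) (π τ v) = 0 := by
    have H : ∀ v ∈ Submodule.span ℝ (Set.range e),
        ι (negInnerQ (EuclideanSpace ℝ (Fin n))) v * ι (negInnerQ (EuclideanSpace ℝ (Fin n))) w
        + ι (negInnerQ (EuclideanSpace ℝ (Fin n))) w
          * ι (negInnerQ (EuclideanSpace ℝ (Fin n))) (π τ v) = 0 := by
      intro v hv
      induction hv using Submodule.span_induction with
      | mem v hv =>
        obtain ⟨k, rfl⟩ := hv
        rw [hπτ k]
        rcases eq_or_ne k i0 with rfl | h0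
        · rw [hτ0, hwdef]
          calc ι (negInnerQ (EuclideanSpace ℝ (Fin n))) (e i0)
                  * ι (negInnerQ (EuclideanSpace ℝ (Fin n))) (e i0 - e i1)
                + ι (negInnerQ (EuclideanSpace ℝ (Fin n))) (e i0 - e i1)
                  * ι (negInnerQ (EuclideanSpace ℝ (Fin n))) (e i1)
              = algebraMap ℝ _ (negInnerQ (EuclideanSpace ℝ (Fin n)) (e i0))
                - algebraMap ℝ _ (negInnerQ (EuclideanSpace ℝ (Fin n)) (e i1)) := by
                simp only [map_sub, mul_sub, sub_mul, ι_sq_scalar]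
                abel
            _ = 0 := by rw [hQe, hQe, sub_self]
        rcases eq_or_ne k i1 with rfl | h1
        · rw [hτ1, hwdef]
          calc ι (negInnerQ (EuclideanSpace ℝ (Fin n))) (e i1)
                  * ι (negInnerQ (EuclideanSpace ℝ (Fin n))) (e i0 - e i1)
                + ι (negInnerQ (EuclideanSpace ℝ (Fin n))) (e i0 - e i1)
                  * ι (negInnerQ (EuclideanSpace ℝ (Fin n))) (e i0)
              = algebraMap ℝ _ (negInnerQ (EuclideanSpace ℝ (Fin n)) (e i0))
                - algebraMap ℝ _ (negInnerQ (EuclideanSpace ℝ (Fin n)) (e i1)) := by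
                simp only [map_sub, mul_sub, sub_mul, ι_sq_scalar]
                abel
            _ = 0 := by rw [hQe, hQe, sub_self]
        · rw [Equiv.swap_apply_of_ne_of_ne h0 h1, ι_mul_ι_add_swap, polar_negInnerQ]
          rw [hwdef, inner_sub_right, hinner, hinner]
          simp [h0, h1]
      | zero => simp
      | add a c _ _ iha ihc =>
        calc ι (negInnerQ (EuclideanSpace ℝ (Fin n))) (a + c)
                * ι (negInnerQ (EuclideanSpace ℝ (Fin n))) w
              + ι (negInnerQ (EuclideanSpace ℝ (Fin n))) w
                * ι (negInnerQ (EuclideanSpace ℝ (Fin n))) (π τ (a + c))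
            = (ι (negInnerQ (EuclideanSpace ℝ (Fin n))) a
                  * ι (negInnerQ (EuclideanSpace ℝ (Fin n))) w
                + ι (negInnerQ (EuclideanSpace ℝ (Fin n))) w
                  * ι (negInnerQ (EuclideanSpace ℝ (Fin n))) (π τ a))
              + (ι (negInnerQ (EuclideanSpace ℝ (Fin n))) c
                  * ι (negInnerQ (EuclideanSpace ℝ (Fin n))) w
                + ι (negInnerQ (EuclideanSpace ℝ (Fin n))) w
                  * ι (negInnerQ (EuclideanSpace ℝ (Fin n))) (π τ c)) := by
              simp only [map_add, add_mul, mul_add]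
              abel
          _ = 0 := by rw [iha, ihc, add_zero]
      | smul r a _ iha =>
        simp only [map_smul, smul_mul_assoc, mul_smul_comm, ← smul_add, iha, smul_zero]
    exact fun v => H v (hspan v)
  set c : CliffordAlgebra (negInnerQ (EuclideanSpace ℝ (Fin n))) :=
    ι (negInnerQ (EuclideanSpace ℝ (Fin n))) w * x with hcdef
  have hcentral : ∀ v : EuclideanSpace ℝ (Fin n),
      involute c * ι (negInnerQ (EuclideanSpace ℝ (Fin n))) v
        = ι (negInnerQ (EuclideanSpace ℝ (Fin n))) v * c := by
    intro v
    have hc1 : involute c = -(ι (negInnerQ (EuclideanSpace ℝ (Fin n))) w * involute x) := by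
      rw [hcdef, map_mul, involute_ι, neg_mul]
    have h2 : ι (negInnerQ (EuclideanSpace ℝ (Fin n))) v
          * ι (negInnerQ (EuclideanSpace ℝ (Fin n))) w
        = -(ι (negInnerQ (EuclideanSpace ℝ (Fin n))) w
          * ι (negInnerQ (EuclideanSpace ℝ (Fin n))) (π τ v)) :=
      eq_neg_of_add_eq_zero_left (hkey v)
    rw [hc1, neg_mul, mul_assoc, hrel v, hcdef, ← mul_assoc, ← mul_assoc, h2, neg_mul]
  obtain ⟨r, hr⟩ := scalar_of_twisted_central c hcentral
  have hww : ι (negInnerQ (EuclideanSpace ℝ (Fin n))) w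
      * ι (negInnerQ (EuclideanSpace ℝ (Fin n))) w = algebraMap ℝ _ (-2) := by
    rw [ι_sq_scalar, hQw]
  have hx' : (-2 : ℝ) • x = r • ι (negInnerQ (EuclideanSpace ℝ (Fin n))) w := by
    have h3 : ι (negInnerQ (EuclideanSpace ℝ (Fin n))) w * c
        = ι (negInnerQ (EuclideanSpace ℝ (Fin n))) w * algebraMap ℝ _ r := by rw [hr]
    rw [hcdef, ← mul_assoc, hww, ← Algebra.smul_def] at h3
    rw [h3, ← Algebra.commutes, ← Algebra.smul_def]
  have h4 : x = ((-(1/2) : ℝ) * r) • ι (negInnerQ (EuclideanSpace ℝ (Fin n))) w := by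
    calc x = ((-(1/2) : ℝ) * (-2 : ℝ)) • x := by norm_num
      _ = (-(1/2) : ℝ) • ((-2 : ℝ) • x) := by rw [mul_smul]
      _ = (-(1/2) : ℝ) • (r • ι (negInnerQ (EuclideanSpace ℝ (Fin n))) w) := by rw [hx']
      _ = ((-(1/2) : ℝ) * r) • ι (negInnerQ (EuclideanSpace ℝ (Fin n))) w := by rw [smul_smul]
  have h1 : algebraMap ℝ (CliffordAlgebra (negInnerQ (EuclideanSpace ℝ (Fin n)))) 1
      = algebraMap ℝ _ (((-(1/2) : ℝ) * r) * ((-(1/2) : ℝ) * r) * (-2)) := by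
    rw [map_one, ← hx2, h4, smul_mul_assoc, mul_smul_comm, smul_smul, hww,
      Algebra.smul_def, ← map_mul]
  haveI : Invertible (2 : ℝ) := invertibleOfNonzero two_ne_zero
  have h2 := (algebraMap ℝ (CliffordAlgebra (negInnerQ (EuclideanSpace ℝ (Fin n))))).injective h1
  nlinarith [sq_nonneg r]
end
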